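/- Discrete potential energy evolution identity: Suppose the midpoint-discretized Ampère equations hold. Then 𝓔_p^{j+1} − 𝓔_p^{j} = −Δt·L·Σ_{s∈S} q^s·α^s·Σ_{k=−N_x}^{N_x} (u^s·Ĉ^{s,j+1/2}_{0,k} + (α^s/√2)·Ĉ^{s,j+1/2}_{1,k})·Ê^{j+1/2}_{−k}. -/

import Mathlib

open Finset

/-- Implicit midpoint value `X^{j+1/2} = (X^j + X^{j+1})/2`. -/
noncomputable def midpt (a b : ℂ) : ℂ := (a + b) / 2

/-- Discrete potential energy at a time level with electric-field coefficients `E`. -/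
noncomputable def potentialEnergy (Nx : ℕ) (ε₀ L : ℝ) (E : ℤ → ℂ) : ℂ :=
  ((ε₀ : ℂ) * (L : ℂ) / 2) * ∑ k ∈ Finset.Icc (-(Nx : ℤ)) (Nx : ℤ), E k * E (-k)

lemma sum_neg_Icc (N : ℤ) (f : ℤ → ℂ) :
    ∑ k ∈ Finset.Icc (-N) N, f (-k) = ∑ k ∈ Finset.Icc (-N) N, f k := by
  apply Finset.sum_nbij' (fun k => -k) (fun k => -k) <;>
    intros <;> simp_all [Finset.mem_Icc] <;> omega

/-- Discrete potential energy evolution identity. -/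
theorem discrete_potential_energy_evolution {σ : Type*} (S : Finset σ)
    (Nv Nx : ℕ) (L Δt ε₀ : ℝ) (hL : 0 < L) (hΔt : 0 < Δt) (hε₀ : 0 < ε₀)
    (ms qs αs us : σ → ℝ) (hms : ∀ s ∈ S, 0 < ms s) (hαs : ∀ s ∈ S, 0 < αs s)
    (Cj Cj1 : σ → ℤ → ℤ → ℂ) (Ej Ej1 : ℤ → ℂ)
    (hAmpere : ∀ k : ℤ, -(Nx : ℤ) ≤ k → k ≤ (Nx : ℤ) →
      (ε₀ : ℂ) * (Ej1 k - Ej k) / (Δt : ℂ)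
        + ∑ s ∈ S, (qs s : ℂ) * (αs s : ℂ) *
            ((us s : ℂ) * midpt (Cj s 0 k) (Cj1 s 0 k)
              + ((αs s : ℂ) / (Real.sqrt 2 : ℂ)) * midpt (Cj s 1 k) (Cj1 s 1 k)) = 0) :
    potentialEnergy Nx ε₀ L Ej1 - potentialEnergy Nx ε₀ L Ej
      = -((Δt : ℂ) * (L : ℂ)) * ∑ s ∈ S, (qs s : ℂ) * (αs s : ℂ) *
          ∑ k ∈ Finset.Icc (-(Nx : ℤ)) (Nx : ℤ),
            ((us s : ℂ) * midpt (Cj s 0 k) (Cj1 s 0 k)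
              + ((αs s : ℂ) / (Real.sqrt 2 : ℂ)) * midpt (Cj s 1 k) (Cj1 s 1 k)) *
              midpt (Ej (-k)) (Ej1 (-k)) := by
  have hε : (ε₀ : ℂ) ≠ 0 := by exact_mod_cast hε₀.ne'
  have hΔ : (Δt : ℂ) ≠ 0 := by exact_mod_cast hΔt.ne'
  set I := Finset.Icc (-(Nx : ℤ)) (Nx : ℤ) with hIdef
  set J : ℤ → ℂ := fun k => ∑ s ∈ S, (qs s : ℂ) * (αs s : ℂ) *
            ((us s : ℂ) * midpt (Cj s 0 k) (Cj1 s 0 k)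
              + ((αs s : ℂ) / (Real.sqrt 2 : ℂ)) * midpt (Cj s 1 k) (Cj1 s 1 k)) with hJ
  have hD : ∀ k ∈ I, Ej1 k - Ej k = -((Δt : ℂ) / ε₀) * J k := by
    intro k hk
    rw [hIdef, Finset.mem_Icc] at hk
    have h : (ε₀ : ℂ) * (Ej1 k - Ej k) / (Δt : ℂ) + J k = 0 := hAmpere k hk.1 hk.2
    field_simp at h ⊢
    linear_combination h
  have key : ∑ k ∈ I, (Ej1 k * Ej1 (-k) - Ej k * Ej (-k))
      = ∑ k ∈ I, 2 * ((Ej1 k - Ej k) * midpt (Ej (-k)) (Ej1 (-k))) := by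
    have h1 : ∑ k ∈ I, (Ej1 k * Ej1 (-k) - Ej k * Ej (-k))
        = ∑ k ∈ I, ((Ej1 k - Ej k) * midpt (Ej (-k)) (Ej1 (-k)))
          + ∑ k ∈ I, (midpt (Ej k) (Ej1 k) * (Ej1 (-k) - Ej (-k))) := by
      rw [← Finset.sum_add_distrib]
      refine Finset.sum_congr rfl fun k _ => ?_
      simp only [midpt]; ring
    have h2 : ∑ k ∈ I, (midpt (Ej k) (Ej1 k) * (Ej1 (-k) - Ej (-k)))
        = ∑ k ∈ I, ((Ej1 k - Ej k) * midpt (Ej (-k)) (Ej1 (-k))) := by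
      have h3 := sum_neg_Icc (Nx : ℤ) (fun k => (Ej1 k - Ej k) * midpt (Ej (-k)) (Ej1 (-k)))
      simp only [neg_neg] at h3
      rw [hIdef, ← h3]
      refine Finset.sum_congr rfl fun k _ => ?_
      ring
    rw [h1, h2, ← Finset.sum_add_distrib]
    refine Finset.sum_congr rfl fun k _ => ?_
    ring
  have hsub : ∑ k ∈ I, 2 * ((Ej1 k - Ej k) * midpt (Ej (-k)) (Ej1 (-k)))
      = ∑ k ∈ I, (-(2 * (Δt : ℂ) / ε₀)) * (J k * midpt (Ej (-k)) (Ej1 (-k))) := by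
    refine Finset.sum_congr rfl fun k hk => ?_
    rw [hD k hk]; ring
  have hswap : ∑ k ∈ I, J k * midpt (Ej (-k)) (Ej1 (-k))
      = ∑ s ∈ S, (qs s : ℂ) * (αs s : ℂ) *
          ∑ k ∈ I, ((us s : ℂ) * midpt (Cj s 0 k) (Cj1 s 0 k)
              + ((αs s : ℂ) / (Real.sqrt 2 : ℂ)) * midpt (Cj s 1 k) (Cj1 s 1 k)) *
              midpt (Ej (-k)) (Ej1 (-k)) := by
    rw [hJ]
    simp only [Finset.sum_mul]
    rw [Finset.sum_comm]
    refine Finset.sum_congr rfl fun s _ => ?_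
    rw [Finset.mul_sum]
    refine Finset.sum_congr rfl fun k _ => ?_
    ring
  unfold potentialEnergy
  rw [← hIdef, ← mul_sub, ← Finset.sum_sub_distrib, key, hsub, ← Finset.mul_sum, hswap]
  field_simp
  congr 2
  refine Finset.sum_congr rfl fun s _ => ?_
  congr 1
  refine Finset.sum_congr rfl fun k _ => ?_
  ring
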